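/- arXiv:q-alg/9706023 — 2 statements merged into one kernel-verified Lean document; each statement's English description precedes it below -/
import Mathlib

section
/- Let p, q ∈ ℂ with 0 < |p| < 1 and q ≠ 0, and let L = {pᵐ qⁿ : m, n ∈ ℤ}. Then for every x ∈ ℂ, x ≠ 0, with x ∉ L, one has the Riemann factorization S_TT(x) · S_TT(x q) = F₁(x)⁻¹ · F₁(x⁻¹ q⁻¹). (The left-hand side is the S-matrix function S_{T₁,T₂^q}(x) governing the exchange of the deformed Virasoro current T₁(z) with the fused current T₂^q(w); the factorization yields the quadratic-linear relation between their Fourier coefficients.) -/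
open Complex Filter

/-- The infinite product `(a; b)_∞ = ∏_{n ≥ 0} (1 - a bⁿ)`. -/
noncomputable def qPoch (a b : ℂ) : ℂ := ∏' n : ℕ, (1 - a * b ^ n)

/-- The structure function `f(x)` of the deformed Virasoro algebra (formula (6)):
`f(x) = (1-x)⁻¹ (xq; p²)_∞ (xpq⁻¹; p²)_∞ / ((xpq; p²)_∞ (xp²q⁻¹; p²)_∞)`. -/
noncomputable def fDV (p q x : ℂ) : ℂ :=
  (1 - x)⁻¹ * (qPoch (x * q) (p ^ 2) * qPoch (x * p * q⁻¹) (p ^ 2)) /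
    (qPoch (x * p * q) (p ^ 2) * qPoch (x * p ^ 2 * q⁻¹) (p ^ 2))

/-- `θ_a(x) = ∏_{n ≥ 1} (1 - x a^{n-1})(1 - x⁻¹ aⁿ)(1 - aⁿ)`. -/
noncomputable def theta (a x : ℂ) : ℂ :=
  ∏' n : ℕ, ((1 - x * a ^ n) * (1 - x⁻¹ * a ^ (n + 1)) * (1 - a ^ (n + 1)))

/-- The S-matrix function of the deformed Virasoro algebra:
`S_TT(x) = θ_{p²}(xp) θ_{p²}(xq⁻¹) θ_{p²}(xp⁻¹q) / (θ_{p²}(xp⁻¹) θ_{p²}(xq) θ_{p²}(xpq⁻¹))`. -/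
noncomputable def STT (p q x : ℂ) : ℂ :=
  theta (p ^ 2) (x * p) * theta (p ^ 2) (x * q⁻¹) * theta (p ^ 2) (x * p⁻¹ * q) /
    (theta (p ^ 2) (x * p⁻¹) * theta (p ^ 2) (x * q) * theta (p ^ 2) (x * p * q⁻¹))

/-- The structure function `F₁(x)` of the exchange relation between `T₁(z)` and `T₂^q(w)`:
`F₁(x) = (xp;p²)_∞ (xp²q;p²)_∞ (xpq⁻¹;p²)_∞ (xq²;p²)_∞ /
  ((x;p²)_∞ (xpq;p²)_∞ (xp²q⁻¹;p²)_∞ (xpq²;p²)_∞)`. -/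
noncomputable def F1 (p q x : ℂ) : ℂ :=
  qPoch (x * p) (p ^ 2) * qPoch (x * p ^ 2 * q) (p ^ 2) * qPoch (x * p * q⁻¹) (p ^ 2) *
      qPoch (x * q ^ 2) (p ^ 2) /
    (qPoch x (p ^ 2) * qPoch (x * p * q) (p ^ 2) * qPoch (x * p ^ 2 * q⁻¹) (p ^ 2) *
      qPoch (x * p * q ^ 2) (p ^ 2))

/-- `qPoch (y pᵐ qⁿ) (p²)` as a function of the integer exponents. -/
noncomputable def Pg (p q y : ℂ) (m n : ℤ) : ℂ := qPoch (y * p ^ m * q ^ n) (p ^ 2)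

lemma dv_summable_log {a : ℂ} (ha : ‖a‖ < 1) (y : ℂ) :
    Summable fun n : ℕ => Complex.log (1 - y * a ^ n) := by
  apply Summable.of_norm_bounded_eventually_nat (g := fun n => 3/2 * (‖y‖ * ‖a‖ ^ n))
  · exact ((summable_geometric_of_lt_one (norm_nonneg a) ha).mul_left ‖y‖).mul_left (3/2)
  · have h0 : Tendsto (fun n : ℕ => ‖y‖ * ‖a‖ ^ n) atTop (nhds 0) := by
      simpa using (tendsto_pow_atTop_nhds_zero_of_lt_one (norm_nonneg a) ha).const_mul ‖y‖
    filter_upwards [h0.eventually (eventually_le_nhds (by norm_num : (0:ℝ) < 1/2))] with n hn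
    have h1 : ‖-(y * a ^ n)‖ ≤ 1/2 := by simpa [norm_mul, norm_pow] using hn
    have h2 := Complex.norm_log_one_add_half_le_self h1
    simpa [sub_eq_add_neg, norm_mul, norm_pow] using h2

lemma dv_mult {a : ℂ} (ha : ‖a‖ < 1) (y : ℂ) (hy : ∀ n : ℕ, 1 - y * a ^ n ≠ 0) :
    Multipliable fun n : ℕ => 1 - y * a ^ n :=
  Complex.multipliable_of_summable_log (dv_summable_log ha y)

lemma dv_ne_zero {a : ℂ} (ha : ‖a‖ < 1) {y : ℂ} (hy : ∀ n : ℕ, 1 - y * a ^ n ≠ 0) :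
    qPoch y a ≠ 0 := by
  have h := Complex.cexp_tsum_eq_tprod (f := fun n : ℕ => 1 - y * a ^ n) hy (dv_summable_log ha y)
  rw [qPoch, ← h]
  exact Complex.exp_ne_zero _

lemma dv_pow_ne {a : ℂ} (ha : ‖a‖ < 1) : ∀ n : ℕ, (1 : ℂ) - a * a ^ n ≠ 0 := by
  intro n h
  rw [sub_eq_zero] at h
  have h2 : ‖a * a ^ n‖ < 1 := by
    rw [norm_mul, norm_pow]
    calc ‖a‖ * ‖a‖ ^ n ≤ ‖a‖ * 1 :=
          mul_le_mul_of_nonneg_left (pow_le_one₀ (norm_nonneg a) ha.le) (norm_nonneg a)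
      _ = ‖a‖ := mul_one _
      _ < 1 := ha
  rw [← h] at h2; simp at h2

lemma qPoch_peel {a : ℂ} (ha : ‖a‖ < 1) {y : ℂ} (hy : ∀ n : ℕ, 1 - y * a ^ n ≠ 0) :
    qPoch y a = (1 - y) * qPoch (y * a) a := by
  have hy' : ∀ n : ℕ, 1 - (y * a) * a ^ n ≠ 0 := fun n => by
    have h := hy (n + 1); rw [show y * a ^ (n + 1) = y * a * a ^ n by ring] at h; exact h
  rw [qPoch, tprod_eq_zero_mul' ((dv_mult ha (y * a) hy').congr (fun n => by ring))]
  simp only [pow_zero, mul_one]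
  congr 1
  rw [qPoch]
  exact tprod_congr fun n => by ring

lemma theta_eq_qPoch {a : ℂ} (ha : ‖a‖ < 1) (X : ℂ)
    (h1 : ∀ n : ℕ, 1 - X * a ^ n ≠ 0) (h2 : ∀ n : ℕ, 1 - (X⁻¹ * a) * a ^ n ≠ 0) :
    theta a X = qPoch X a * qPoch (X⁻¹ * a) a * qPoch a a := by
  rw [theta, qPoch, qPoch, qPoch]
  rw [show (fun n : ℕ => (1 - X * a ^ n) * (1 - X⁻¹ * a ^ (n + 1)) * (1 - a ^ (n + 1)))
      = fun n : ℕ => ((1 - X * a ^ n) * (1 - (X⁻¹ * a) * a ^ n)) * (1 - a * a ^ n)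
      from funext fun n => by ring]
  rw [Multipliable.tprod_mul ((dv_mult ha X h1).mul (dv_mult ha _ h2)) (dv_mult ha a (dv_pow_ne ha)),
    Multipliable.tprod_mul (dv_mult ha X h1) (dv_mult ha _ h2)]

attribute [irreducible] qPoch theta Pg STT F1

set_option maxHeartbeats 4000000 in
/-- Riemann factorization of the S-matrix function `S_{T₁,T₂^q}(x) = S_TT(x) S_TT(xq)`:
for `x ∉ L = pᶻqᶻ`, `S_TT(x) · S_TT(xq) = F₁(x)⁻¹ · F₁(x⁻¹q⁻¹)`. -/
theorem STT_T1_T2q_riemann_factorization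
    (p q x : ℂ) (hp0 : 0 < ‖p‖) (hp1 : ‖p‖ < 1) (hq : q ≠ 0)
    (hx : x ≠ 0) (hxL : ¬ ∃ m n : ℤ, x = p ^ m * q ^ n) :
    STT p q x * STT p q (x * q) = (F1 p q x)⁻¹ * F1 p q (x⁻¹ * q⁻¹) := by
  have hp : p ≠ 0 := by intro h; rw [h] at hp0; simp at hp0
  have hp1' : ‖p‖ < 1 := by exact hp1
  have ha : ‖p ^ 2‖ < 1 := by
    rw [norm_pow]; exact pow_lt_one₀ (norm_nonneg p) hp1' two_ne_zero
  have hL : ∀ m n : ℤ, x ≠ p ^ m * q ^ n := fun m n h => hxL ⟨m, n, h⟩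
  have hLi : ∀ m n : ℤ, x⁻¹ ≠ p ^ m * q ^ n := by
    intro m n h
    apply hL (-m) (-n)
    rw [← inv_inv x, h, mul_inv, ← zpow_neg, ← zpow_neg]
  -- the basic nonvanishing of linear factors
  have hfac : ∀ (y : ℂ), (∀ m n : ℤ, y ≠ p ^ m * q ^ n) →
      ∀ (m n : ℤ) (k : ℕ), (1 : ℂ) - y * p ^ m * q ^ n * (p ^ 2) ^ k ≠ 0 := by
    intro y hy m n k h
    rw [sub_eq_zero] at h
    apply hy (-(m + 2 * (k : ℤ))) (-n)
    have e : ((p ^ 2) ^ k : ℂ) = p ^ (2 * (k : ℤ)) := by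
      rw [zpow_mul, zpow_ofNat, zpow_natCast]
    have h2 : y * (p ^ (m + 2 * (k : ℤ)) * q ^ n) = 1 := by
      rw [zpow_add₀ hp, ← e, h]; ring
    have h3 : y = (p ^ (m + 2 * (k : ℤ)) * q ^ n)⁻¹ := eq_inv_of_mul_eq_one_left h2
    rw [h3, mul_inv, ← zpow_neg, ← zpow_neg]
  have hfx := hfac x hL
  have hfxi := hfac x⁻¹ hLi
  -- nonvanishing of the Pochhammer symbols
  have hPg : ∀ (y : ℂ), (∀ m n : ℤ, y ≠ p ^ m * q ^ n) → ∀ m n : ℤ, Pg p q y m n ≠ 0 := by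
    intro y hy m n
    simp only [Pg]
    exact dv_ne_zero ha (fun k => hfac y hy m n k)
  have hPa : qPoch (p ^ 2) (p ^ 2) ≠ 0 := dv_ne_zero ha (dv_pow_ne ha)
  -- the peeling identity
  have hpeel : ∀ (y : ℂ), (∀ m n : ℤ, y ≠ p ^ m * q ^ n) → ∀ (m n m' : ℤ), m' = m + 2 →
      Pg p q y m n = (1 - y * p ^ m * q ^ n) * Pg p q y m' n := by
    intro y hy m n m' hm'
    subst hm'
    simp only [Pg]
    rw [qPoch_peel ha (fun k => hfac y hy m n k),
      show y * p ^ m * q ^ n * p ^ 2 = y * p ^ (m + 2) * q ^ n from by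
        rw [zpow_add₀ hp, zpow_ofNat]; ring]
  -- theta in terms of Pg
  have harg : ∀ m n : ℤ, (x * p ^ m * q ^ n)⁻¹ * p ^ 2 = x⁻¹ * p ^ (2 - m) * q ^ (-n) := by
    intro m n
    rw [show (2 - m : ℤ) = -m + 2 from by ring, zpow_add₀ hp, zpow_neg, zpow_neg,
      zpow_ofNat, mul_inv, mul_inv]
    ring
  have htheta : ∀ m n : ℤ, theta (p ^ 2) (x * p ^ m * q ^ n)
      = qPoch (p ^ 2) (p ^ 2) * Pg p q x m n * Pg p q x⁻¹ (2 - m) (-n) := by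
    intro m n
    have h2 : ∀ k : ℕ, 1 - ((x * p ^ m * q ^ n)⁻¹ * p ^ 2) * (p ^ 2) ^ k ≠ 0 := by
      intro k
      rw [harg m n]
      exact hfxi (2 - m) (-n) k
    rw [theta_eq_qPoch ha _ (fun k => hfx m n k) h2, harg m n]
    simp only [Pg]
    ring
  -- theta instances
  have t1 : theta (p ^ 2) (x * p)
      = qPoch (p ^ 2) (p ^ 2) * Pg p q x 1 0 * Pg p q x⁻¹ 1 0 := by
    rw [show x * p = x * p ^ (1 : ℤ) * q ^ (0 : ℤ) by simp, htheta]; norm_num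
  have t2 : theta (p ^ 2) (x * q⁻¹)
      = qPoch (p ^ 2) (p ^ 2) * Pg p q x 0 (-1) * Pg p q x⁻¹ 2 1 := by
    rw [show x * q⁻¹ = x * p ^ (0 : ℤ) * q ^ (-1 : ℤ) by simp [zpow_neg], htheta]; norm_num
  have t3 : theta (p ^ 2) (x * p⁻¹ * q)
      = qPoch (p ^ 2) (p ^ 2) * Pg p q x (-1) 1 * Pg p q x⁻¹ 3 (-1) := by
    rw [show x * p⁻¹ * q = x * p ^ (-1 : ℤ) * q ^ (1 : ℤ) by simp [zpow_neg], htheta]; norm_num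
  have t4 : theta (p ^ 2) (x * p⁻¹)
      = qPoch (p ^ 2) (p ^ 2) * Pg p q x (-1) 0 * Pg p q x⁻¹ 3 0 := by
    rw [show x * p⁻¹ = x * p ^ (-1 : ℤ) * q ^ (0 : ℤ) by simp [zpow_neg], htheta]; norm_num
  have t5 : theta (p ^ 2) (x * q)
      = qPoch (p ^ 2) (p ^ 2) * Pg p q x 0 1 * Pg p q x⁻¹ 2 (-1) := by
    rw [show x * q = x * p ^ (0 : ℤ) * q ^ (1 : ℤ) by simp, htheta]; norm_num
  have t6 : theta (p ^ 2) (x * p * q⁻¹)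
      = qPoch (p ^ 2) (p ^ 2) * Pg p q x 1 (-1) * Pg p q x⁻¹ 1 1 := by
    rw [show x * p * q⁻¹ = x * p ^ (1 : ℤ) * q ^ (-1 : ℤ) by simp [zpow_neg], htheta]; norm_num
  have t7 : theta (p ^ 2) (x * q * p)
      = qPoch (p ^ 2) (p ^ 2) * Pg p q x 1 1 * Pg p q x⁻¹ 1 (-1) := by
    rw [show x * q * p = x * p ^ (1 : ℤ) * q ^ (1 : ℤ) by simp; ring, htheta]; norm_num
  have t8 : theta (p ^ 2) (x * q * q⁻¹)
      = qPoch (p ^ 2) (p ^ 2) * Pg p q x 0 0 * Pg p q x⁻¹ 2 0 := by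
    rw [show x * q * q⁻¹ = x * p ^ (0 : ℤ) * q ^ (0 : ℤ) by field_simp, htheta]; norm_num
  have t9 : theta (p ^ 2) (x * q * p⁻¹ * q)
      = qPoch (p ^ 2) (p ^ 2) * Pg p q x (-1) 2 * Pg p q x⁻¹ 3 (-2) := by
    rw [show x * q * p⁻¹ * q = x * p ^ (-1 : ℤ) * q ^ (2 : ℤ)
      by simp [zpow_neg, zpow_ofNat]; ring, htheta]; norm_num
  have t10 : theta (p ^ 2) (x * q * p⁻¹)
      = qPoch (p ^ 2) (p ^ 2) * Pg p q x (-1) 1 * Pg p q x⁻¹ 3 (-1) := by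
    rw [show x * q * p⁻¹ = x * p ^ (-1 : ℤ) * q ^ (1 : ℤ) by simp [zpow_neg]; ring, htheta]
    norm_num
  have t11 : theta (p ^ 2) (x * q * q)
      = qPoch (p ^ 2) (p ^ 2) * Pg p q x 0 2 * Pg p q x⁻¹ 2 (-2) := by
    rw [show x * q * q = x * p ^ (0 : ℤ) * q ^ (2 : ℤ) by simp [zpow_ofNat]; ring, htheta]
    norm_num
  have t12 : theta (p ^ 2) (x * q * p * q⁻¹)
      = qPoch (p ^ 2) (p ^ 2) * Pg p q x 1 0 * Pg p q x⁻¹ 1 0 := by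
    rw [show x * q * p * q⁻¹ = x * p ^ (1 : ℤ) * q ^ (0 : ℤ) by field_simp, htheta]
    norm_num
  -- qPoch instances
  have g1 : qPoch (x * p) (p ^ 2) = Pg p q x 1 0 := by
    simp only [Pg]; congr 1; simp
  have g2 : qPoch (x * p ^ 2 * q) (p ^ 2) = Pg p q x 2 1 := by
    simp only [Pg]; congr 1; simp [zpow_ofNat]
  have g3 : qPoch (x * p * q⁻¹) (p ^ 2) = Pg p q x 1 (-1) := by
    simp only [Pg]; congr 1; simp [zpow_neg]
  have g4 : qPoch (x * q ^ 2) (p ^ 2) = Pg p q x 0 2 := by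
    simp only [Pg]; congr 1; simp [zpow_ofNat]
  have g5 : qPoch x (p ^ 2) = Pg p q x 0 0 := by
    simp only [Pg]; congr 1; simp
  have g6 : qPoch (x * p * q) (p ^ 2) = Pg p q x 1 1 := by
    simp only [Pg]; congr 1; simp
  have g7 : qPoch (x * p ^ 2 * q⁻¹) (p ^ 2) = Pg p q x 2 (-1) := by
    simp only [Pg]; congr 1; simp [zpow_neg, zpow_ofNat]
  have g8 : qPoch (x * p * q ^ 2) (p ^ 2) = Pg p q x 1 2 := by
    simp only [Pg]; congr 1; simp [zpow_ofNat]
  have g9 : qPoch (x⁻¹ * q⁻¹ * p) (p ^ 2) = Pg p q x⁻¹ 1 (-1) := by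
    simp only [Pg]; congr 1; simp [zpow_neg]; ring
  have g10 : qPoch (x⁻¹ * q⁻¹ * p ^ 2 * q) (p ^ 2) = Pg p q x⁻¹ 2 0 := by
    simp only [Pg]; congr 1; simp [zpow_ofNat]; field_simp
  have g11 : qPoch (x⁻¹ * q⁻¹ * p * q⁻¹) (p ^ 2) = Pg p q x⁻¹ 1 (-2) := by
    simp only [Pg]; congr 1; simp [zpow_neg, zpow_ofNat]; ring
  have g12 : qPoch (x⁻¹ * q⁻¹ * q ^ 2) (p ^ 2) = Pg p q x⁻¹ 0 1 := by
    simp only [Pg]; congr 1; simp [zpow_ofNat]; field_simp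
  have g13 : qPoch (x⁻¹ * q⁻¹) (p ^ 2) = Pg p q x⁻¹ 0 (-1) := by
    simp only [Pg]; congr 1; simp [zpow_neg]
  have g14 : qPoch (x⁻¹ * q⁻¹ * p * q) (p ^ 2) = Pg p q x⁻¹ 1 0 := by
    simp only [Pg]; congr 1; field_simp
  have g15 : qPoch (x⁻¹ * q⁻¹ * p ^ 2 * q⁻¹) (p ^ 2) = Pg p q x⁻¹ 2 (-2) := by
    simp only [Pg]; congr 1; simp [zpow_neg, zpow_ofNat]; field_simp
  have g16 : qPoch (x⁻¹ * q⁻¹ * p * q ^ 2) (p ^ 2) = Pg p q x⁻¹ 1 1 := by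
    simp only [Pg]; congr 1; field_simp
  -- peel instances
  have r1 : Pg p q x 0 (-1) = (1 - x * q⁻¹) * Pg p q x 2 (-1) := by
    rw [hpeel x hL 0 (-1) 2 (by norm_num)]; norm_num [zpow_neg]
  have r2 : Pg p q x (-1) 2 = (1 - x * p⁻¹ * q ^ 2) * Pg p q x 1 2 := by
    rw [hpeel x hL (-1) 2 1 (by norm_num)]; norm_num [zpow_neg, zpow_ofNat]
  have r3 : Pg p q x (-1) 0 = (1 - x * p⁻¹) * Pg p q x 1 0 := by
    rw [hpeel x hL (-1) 0 1 (by norm_num)]; norm_num [zpow_neg]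
  have r4 : Pg p q x 0 1 = (1 - x * q) * Pg p q x 2 1 := by
    rw [hpeel x hL 0 1 2 (by norm_num)]; norm_num
  have r5 : Pg p q x⁻¹ 0 1 = (1 - x⁻¹ * q) * Pg p q x⁻¹ 2 1 := by
    rw [hpeel x⁻¹ hLi 0 1 2 (by norm_num)]; norm_num
  have r6 : Pg p q x⁻¹ 1 (-2) = (1 - x⁻¹ * p * (q ^ 2)⁻¹) * Pg p q x⁻¹ 3 (-2) := by
    rw [hpeel x⁻¹ hLi 1 (-2) 3 (by norm_num)]; norm_num [zpow_neg, zpow_ofNat]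
  have r7 : Pg p q x⁻¹ 0 (-1) = (1 - x⁻¹ * q⁻¹) * Pg p q x⁻¹ 2 (-1) := by
    rw [hpeel x⁻¹ hLi 0 (-1) 2 (by norm_num)]; norm_num [zpow_neg]
  have r8 : Pg p q x⁻¹ 1 0 = (1 - x⁻¹ * p) * Pg p q x⁻¹ 3 0 := by
    rw [hpeel x⁻¹ hLi 1 0 3 (by norm_num)]; norm_num
  -- scalar nonvanishing
  have s1 : (1 : ℂ) - x * q⁻¹ ≠ 0 := by
    have := hfx 0 (-1) 0; simpa [zpow_neg] using this
  have s2 : (1 : ℂ) - x * p⁻¹ * q ^ 2 ≠ 0 := by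
    have := hfx (-1) 2 0; simpa [zpow_neg, zpow_ofNat] using this
  have s3 : (1 : ℂ) - x * p⁻¹ ≠ 0 := by
    have := hfx (-1) 0 0; simpa [zpow_neg] using this
  have s4 : (1 : ℂ) - x * q ≠ 0 := by
    have := hfx 0 1 0; simpa using this
  have s5 : (1 : ℂ) - x⁻¹ * q ≠ 0 := by
    have := hfxi 0 1 0; simpa using this
  have s6 : (1 : ℂ) - x⁻¹ * p * (q ^ 2)⁻¹ ≠ 0 := by
    have := hfxi 1 (-2) 0; simpa [zpow_neg, zpow_ofNat] using this
  have s7 : (1 : ℂ) - x⁻¹ * q⁻¹ ≠ 0 := by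
    have := hfxi 0 (-1) 0; simpa [zpow_neg] using this
  have s8 : (1 : ℂ) - x⁻¹ * p ≠ 0 := by
    have := hfxi 1 0 0; simpa using this
  have P := hPg x hL
  have P' := hPg x⁻¹ hLi
  -- now compute
  simp only [STT, F1]
  rw [t1, t2, t3, t4, t5, t6, t7, t8, t9, t10, t11, t12,
    g1, g2, g3, g4, g5, g6, g7, g8, g9, g10, g11, g12, g13, g14, g15, g16,
    r1, r2, r3, r4, r5, r6, r7, r8]
  rw [inv_div, div_mul_div_comm, div_mul_div_comm]
  rw [div_eq_div_iff]
  rotate_left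
  · repeat' apply mul_ne_zero
    all_goals first
      | exact hPa | exact P _ _ | exact P' _ _ | exact hx | exact hp | exact hq
      | exact s1 | exact s2 | exact s3 | exact s4 | exact s5 | exact s6 | exact s7 | exact s8
  · repeat' apply mul_ne_zero
    all_goals first
      | exact hPa | exact P _ _ | exact P' _ _ | exact hx | exact hp | exact hq
      | exact s1 | exact s2 | exact s3 | exact s4 | exact s5 | exact s6 | exact s7 | exact s8
  generalize qPoch (p ^ 2) (p ^ 2) = A
  generalize Pg p q x⁻¹ 2 1 = C1
  generalize Pg p q x⁻¹ 3 (-1) = C2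
  generalize Pg p q x⁻¹ 3 0 = C3
  generalize Pg p q x⁻¹ 2 (-1) = C4
  generalize Pg p q x⁻¹ 1 1 = C5
  generalize Pg p q x⁻¹ 1 (-1) = C6
  generalize Pg p q x⁻¹ 2 0 = C7
  generalize Pg p q x⁻¹ 3 (-2) = C8
  generalize Pg p q x⁻¹ 2 (-2) = C9
  generalize Pg p q x 1 0 = B1
  generalize Pg p q x 2 1 = B2
  generalize Pg p q x 2 (-1) = B3
  generalize Pg p q x 1 2 = B4
  generalize Pg p q x (-1) 1 = B5
  generalize Pg p q x 1 (-1) = B6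
  generalize Pg p q x 1 1 = B7
  generalize Pg p q x 0 0 = B8
  generalize Pg p q x 0 2 = B9
  have hS : (1 - x * q⁻¹) * (1 - x * p⁻¹ * q ^ 2) * (1 - x⁻¹ * q⁻¹) * (1 - x⁻¹ * p)
      = (1 - x⁻¹ * p * (q ^ 2)⁻¹) * (1 - x⁻¹ * q) * (1 - x * p⁻¹) * (1 - x * q) := by
    field_simp
    ring
  linear_combination (A ^ 6 * B1 ^ 2 * B2 * B3 * B4 * B5 * B6 * B7 * B8 * B9 * C1 * C2 * C3 ^ 2 *
    C4 * C5 * C6 * C7 * C8 * C9 * (1 - x⁻¹ * p)) * hS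
end

section
/- Let p, q ∈ ℂ with 0 < |p| < 1 and q ≠ 0, and let L = {pᵐ qⁿ : m, n ∈ ℤ}. Then for every x ∈ ℂ, x ≠ 0, with x ∉ L, one has F₂(x) = f(x)² · f(x q) · f(x q⁻¹), i.e., the structure function governing the self-exchange of the fused current T₂^q is the product of the deformed Virasoro structure functions at the four point-ratios x, x, xq, xq⁻¹. -/
/-- The structure function `F₂(x)` of the self-exchange of the fused current `T₂^q`:
`F₂(x) = (1-x)⁻¹ (xp²q;p²)_∞ (xpq⁻¹;p²)_∞² (xq;p²)_∞ (xq²;p²)_∞ (xpq⁻²;p²)_∞ /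
  ((xpq;p²)_∞² (xq⁻¹;p²)_∞ (xpq²;p²)_∞ (xp²q⁻²;p²)_∞ (xp²q⁻¹;p²)_∞)`. -/
noncomputable def F2 (p q x : ℂ) : ℂ :=
  (1 - x)⁻¹ *
    (qPoch (x * p ^ 2 * q) (p ^ 2) * qPoch (x * p * q⁻¹) (p ^ 2) ^ 2 *
      qPoch (x * q) (p ^ 2) * qPoch (x * q ^ 2) (p ^ 2) * qPoch (x * p * q⁻¹ ^ 2) (p ^ 2)) /
    (qPoch (x * p * q) (p ^ 2) ^ 2 * qPoch (x * q⁻¹) (p ^ 2) *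
      qPoch (x * p * q ^ 2) (p ^ 2) * qPoch (x * p ^ 2 * q⁻¹ ^ 2) (p ^ 2) *
      qPoch (x * p ^ 2 * q⁻¹) (p ^ 2))

lemma summable_log_qPoch (a b : ℂ) (hb : ‖b‖ < 1) :
    Summable fun n : ℕ => Complex.log (1 - a * b ^ n) := by
  have hg : Summable fun n : ℕ => (3/2 : ℝ) * (‖a‖ * ‖b‖ ^ n) :=
    ((summable_geometric_of_lt_one (norm_nonneg b) hb).mul_left _).mul_left _
  apply Summable.of_norm_bounded_eventually_nat hg
  have ht : Filter.Tendsto (fun n : ℕ => ‖a‖ * ‖b‖ ^ n)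
      Filter.atTop (nhds 0) := by
    simpa using (tendsto_pow_atTop_nhds_zero_of_lt_one (norm_nonneg b)
      hb).const_mul ‖a‖
  filter_upwards [ht.eventually_le_const (by norm_num : (0:ℝ) < 1/2)] with n hn
  have h2 : ‖-(a * b ^ n)‖ ≤ 1/2 := by
    simpa [norm_mul, norm_pow] using hn
  have := Complex.norm_log_one_add_half_le_self h2
  calc ‖Complex.log (1 - a * b ^ n)‖
      = ‖Complex.log (1 + -(a * b ^ n))‖ := by ring_nf
    _ ≤ 3/2 * ‖-(a * b ^ n)‖ := this
    _ = 3/2 * (‖a‖ * ‖b‖ ^ n) := by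
        simp [norm_mul, norm_pow]

lemma qPoch_ne_zero (a b : ℂ) (hb : ‖b‖ < 1)
    (h : ∀ n : ℕ, 1 - a * b ^ n ≠ 0) : qPoch a b ≠ 0 := by
  have h0 := Complex.cexp_tsum_eq_tprod (f := fun n : ℕ => 1 - a * b ^ n) h
    (summable_log_qPoch a b hb)
  rw [qPoch, ← h0]
  exact Complex.exp_ne_zero _

lemma multipliable_qPoch (a b : ℂ) (hb : ‖b‖ < 1)
    (h : ∀ n : ℕ, 1 - a * b ^ n ≠ 0) :
    Multipliable fun n : ℕ => 1 - a * b ^ n := by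
  exact Complex.multipliable_of_summable_log (summable_log_qPoch a b hb)

set_option maxHeartbeats 1000000 in
lemma qPoch_shift (a b : ℂ) (hb : ‖b‖ < 1)
    (h : ∀ n : ℕ, 1 - a * b ^ n ≠ 0) :
    qPoch a b = (1 - a) * qPoch (a * b) b := by
  have hc : ∀ n : ℕ, 1 - (a * b) * b ^ n ≠ 0 := fun n => by
    rw [show a * b * b ^ n = a * b ^ (n + 1) by ring]; exact h (n + 1)
  have h' : Multipliable fun n : ℕ => 1 - a * b ^ (n + 1) :=
    (multipliable_qPoch (a * b) b hb hc).congr fun n => by ring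
  rw [qPoch, tprod_eq_zero_mul' h']
  congr 1
  · simp
  · rw [qPoch]
    congr 1
    funext n
    ring


set_option maxHeartbeats 2000000 in
lemma alg_aux (u v w a21 a1m1 a02 a1m2 a11 a12 a2m2 a2m1 a10 a20 : ℂ)
    (hu : u ≠ 0) (hv : v ≠ 0) (hw : w ≠ 0) (h21 : a21 ≠ 0) (h1m1 : a1m1 ≠ 0)
    (h02 : a02 ≠ 0) (h1m2 : a1m2 ≠ 0) (h11 : a11 ≠ 0) (h12 : a12 ≠ 0)
    (h2m2 : a2m2 ≠ 0) (h2m1 : a2m1 ≠ 0) (h10 : a10 ≠ 0) (h20 : a20 ≠ 0) :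
    u⁻¹ * (a21 * a1m1 ^ 2 * (v * a21) * a02 * a1m2) /
      (a11 ^ 2 * (w * a2m1) * a12 * a2m2 * a2m1) =
    (u⁻¹ * (v * a21 * a1m1) / (a11 * a2m1)) ^ 2 *
      (v⁻¹ * (a02 * a10) / (a12 * a20)) *
      (w⁻¹ * (u * a20 * a1m2) / (a10 * a2m2)) := by
  have g1 : u * u⁻¹ = 1 := mul_inv_cancel₀ hu
  have g2 : v * v⁻¹ = 1 := mul_inv_cancel₀ hv
  have g3 : a10 * a10⁻¹ = 1 := mul_inv_cancel₀ h10
  have g4 : a20 * a20⁻¹ = 1 := mul_inv_cancel₀ h20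
  field_simp

/-- The structure function of the self-exchange of the fused current `T₂^q` factors
through the deformed-Virasoro structure function: `F₂(x) = f(x)² f(xq) f(xq⁻¹)`
for `x ∉ L = pᶻqᶻ`. -/
theorem F2_eq_f_sq_mul_f_mul_f
    (p q x : ℂ) (hp0 : 0 < ‖p‖) (hp1 : ‖p‖ < 1) (hq : q ≠ 0)
    (hx : x ≠ 0) (hxL : ¬ ∃ m n : ℤ, x = p ^ m * q ^ n) :
    F2 p q x = (fDV p q x) ^ 2 * fDV p q (x * q) * fDV p q (x * q⁻¹) := by

  have hp : p ≠ 0 := by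
    intro h; rw [h] at hp0; simp at hp0
  have habs : ‖p ^ 2‖ < 1 := by
    rw [norm_pow]
    exact pow_lt_one₀ (norm_nonneg p) hp1 (by norm_num)
  push_neg at hxL
  have hfac : ∀ m n : ℤ, 1 - x * p ^ m * q ^ n ≠ 0 := by
    intro m n
    rw [sub_ne_zero]
    intro h
    apply hxL (-m) (-n)
    have hpm : (p:ℂ) ^ m ≠ 0 := zpow_ne_zero m hp
    have hqn : (q:ℂ) ^ n ≠ 0 := zpow_ne_zero n hq
    rw [zpow_neg, zpow_neg]
    field_simp
    linear_combination -h
  have key : ∀ (m n : ℤ) (k : ℕ), 1 - (x * p ^ m * q ^ n) * (p ^ 2) ^ k ≠ 0 := by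
    intro m n k
    have h2 : ((p:ℂ) ^ 2) ^ k = p ^ ((2 * k : ℕ) : ℤ) := by
      rw [← pow_mul, zpow_natCast]
    rw [show (x * p ^ m * q ^ n) * (p ^ 2) ^ k = x * (p ^ m * ((p ^ 2) ^ k)) * q ^ n by ring,
        h2, ← zpow_add₀ hp]
    exact hfac _ n
  have H : ∀ m n : ℤ, qPoch (x * p ^ m * q ^ n) (p ^ 2) ≠ 0 := fun m n =>
    qPoch_ne_zero _ _ habs (key m n)
  have Hn : ∀ m n : ℕ, qPoch (x * p ^ m * q ^ n) (p ^ 2) ≠ 0 := fun m n => by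
    have := H m n; rwa [zpow_natCast, zpow_natCast] at this
  have Hi : ∀ m n : ℕ, qPoch (x * p ^ m * q⁻¹ ^ n) (p ^ 2) ≠ 0 := fun m n => by
    have := H m (-n); rwa [zpow_natCast, zpow_neg, zpow_natCast, ← inv_pow] at this
  -- nonzero facts in literal form
  have n21 : qPoch (x * p ^ 2 * q) (p ^ 2) ≠ 0 := by simpa using Hn 2 1
  have n1m1 : qPoch (x * p * q⁻¹) (p ^ 2) ≠ 0 := by simpa using Hi 1 1
  have n02 : qPoch (x * q ^ 2) (p ^ 2) ≠ 0 := by simpa using Hn 0 2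
  have n1m2 : qPoch (x * p * q⁻¹ ^ 2) (p ^ 2) ≠ 0 := by simpa using Hi 1 2
  have n11 : qPoch (x * p * q) (p ^ 2) ≠ 0 := by simpa using Hn 1 1
  have n12 : qPoch (x * p * q ^ 2) (p ^ 2) ≠ 0 := by simpa using Hn 1 2
  have n2m2 : qPoch (x * p ^ 2 * q⁻¹ ^ 2) (p ^ 2) ≠ 0 := by simpa using Hi 2 2
  have n2m1 : qPoch (x * p ^ 2 * q⁻¹) (p ^ 2) ≠ 0 := by simpa using Hi 2 1
  have n10 : qPoch (x * p) (p ^ 2) ≠ 0 := by simpa using Hn 1 0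
  have n20 : qPoch (x * p ^ 2) (p ^ 2) ≠ 0 := by simpa using Hn 2 0
  have h00 : (1 : ℂ) - x ≠ 0 := by simpa using hfac 0 0
  have h01 : (1 : ℂ) - x * q ≠ 0 := by simpa using hfac 0 1
  have h0m1 : (1 : ℂ) - x * q⁻¹ ≠ 0 := by
    have := hfac 0 (-1); simpa [zpow_neg] using this
  -- shift identities
  have s1 : qPoch (x * q) (p ^ 2) = (1 - x * q) * qPoch (x * p ^ 2 * q) (p ^ 2) := by
    have hk : ∀ k : ℕ, 1 - (x * q) * (p ^ 2) ^ k ≠ 0 := fun k => by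
      simpa using key 0 1 k
    have h := qPoch_shift (x * q) (p ^ 2) habs hk
    rwa [show x * q * p ^ 2 = x * p ^ 2 * q by ring] at h
  have s2 : qPoch x (p ^ 2) = (1 - x) * qPoch (x * p ^ 2) (p ^ 2) := by
    have hk : ∀ k : ℕ, 1 - x * (p ^ 2) ^ k ≠ 0 := fun k => by
      simpa using key 0 0 k
    exact qPoch_shift x (p ^ 2) habs hk
  have s3 : qPoch (x * q⁻¹) (p ^ 2) = (1 - x * q⁻¹) * qPoch (x * p ^ 2 * q⁻¹) (p ^ 2) := by
    have hk : ∀ k : ℕ, 1 - (x * q⁻¹) * (p ^ 2) ^ k ≠ 0 := fun k => by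
      have := key 0 (-1) k; simpa [zpow_neg] using this
    have h := qPoch_shift (x * q⁻¹) (p ^ 2) habs hk
    rwa [show x * q⁻¹ * p ^ 2 = x * p ^ 2 * q⁻¹ by ring] at h
  simp only [F2, fDV]
  rw [show x * q * q = x * q ^ 2 by ring,
      show x * q * p * q⁻¹ = x * p by field_simp,
      show x * q * p * q = x * p * q ^ 2 by ring,
      show x * q * p ^ 2 * q⁻¹ = x * p ^ 2 by field_simp,
      show x * q⁻¹ * q = x by field_simp,
      show x * q⁻¹ * p * q⁻¹ = x * p * q⁻¹ ^ 2 by ring,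
      show x * q⁻¹ * p * q = x * p by field_simp,
      show x * q⁻¹ * p ^ 2 * q⁻¹ = x * p ^ 2 * q⁻¹ ^ 2 by ring]
  have hqx : q - x ≠ 0 := by
    rw [sub_ne_zero]
    intro h
    apply h0m1
    rw [← h, mul_inv_cancel₀ hq, sub_self]
  rw [s1, s2, s3]
  exact alg_aux (1 - x) (1 - x * q) (1 - x * q⁻¹) _ _ _ _ _ _ _ _ _ _
    h00 h01 h0m1 n21 n1m1 n02 n1m2 n11 n12 n2m2 n2m1 n10 n20
end
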